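/- Let E be a finite-dimensional real inner product space, Φ a finite (Borel) measure on ℝ³, and f : ℝ³ → (E →ₗ[ℝ] E) a measurable map such that every f p is self-adjoint and positive semidefinite (0 ≤ ⟪w, f p w⟫ for all w) and ‖f p‖ ≤ 1 for all p. Then the kernel B(x, y) = ∫ cos ⟪p, y − x⟫ · f p dΦ(p) is positive semidefinite: for every n, every family of points x : Fin n → ℝ³ and vectors v : Fin n → E, one has 0 ≤ ∑ i, ∑ j, ∫ cos ⟪p, x j − x i⟫ * ⟪v i, f p (v j)⟫ dΦ(p). (This is the direct half of the correspondence in Theorem 1: every such spectral integral is a valid two-point correlation tensor of a homogeneous field invariant under p ↦ −p.) -/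
import Mathlib


open MeasureTheory RealInnerProductSpace

/-- for a finite measure `Φ` on `ℝ³` and a measurable family `f p` of
self-adjoint, positive semidefinite operators of norm at most one, the kernel
`B(x, y) = ∫ cos ⟪p, y − x⟫ · f p dΦ(p)` is positive semidefinite. -/
theorem spectral_kernel_posSemidef
    {E : Type*} [NormedAddCommGroup E] [InnerProductSpace ℝ E] [FiniteDimensional ℝ E]
    (Φ : Measure (EuclideanSpace ℝ (Fin 3))) [IsFiniteMeasure Φ]
    (f : EuclideanSpace ℝ (Fin 3) → (E →ₗ[ℝ] E))
    (hmeas : ∀ u w : E, Measurable fun p => ⟪u, f p w⟫)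
    (hsymm : ∀ p, ∀ u w : E, ⟪f p u, w⟫ = ⟪u, f p w⟫)
    (hpos : ∀ p, ∀ w : E, 0 ≤ ⟪w, f p w⟫)
    (hbound : ∀ p, ∀ w : E, ‖f p w‖ ≤ ‖w‖) :
    ∀ (n : ℕ) (x : Fin n → EuclideanSpace ℝ (Fin 3)) (v : Fin n → E),
      0 ≤ ∑ i, ∑ j, ∫ p, Real.cos ⟪p, x j - x i⟫ * ⟪v i, f p (v j)⟫ ∂Φ := by
  intro n x v
  -- integrability of each term
  have hint : ∀ i j : Fin n,
      Integrable (fun p => Real.cos ⟪p, x j - x i⟫ * ⟪v i, f p (v j)⟫) Φ := by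
    intro i j
    have hm : Measurable fun p : EuclideanSpace ℝ (Fin 3) =>
        Real.cos ⟪p, x j - x i⟫ * ⟪v i, f p (v j)⟫ := by
      exact (Real.measurable_cos.comp
        ((continuous_id.inner continuous_const).measurable)).mul (hmeas (v i) (v j))
    refine (integrable_const (‖v i‖ * ‖v j‖)).mono' hm.aestronglyMeasurable ?_
    filter_upwards with p
    have h1 : |Real.cos ⟪p, x j - x i⟫| ≤ 1 := Real.abs_cos_le_one _
    have h2 : |⟪v i, f p (v j)⟫| ≤ ‖v i‖ * ‖v j‖ := by
      calc |⟪v i, f p (v j)⟫| ≤ ‖v i‖ * ‖f p (v j)‖ := abs_real_inner_le_norm _ _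
        _ ≤ ‖v i‖ * ‖v j‖ := by
            exact mul_le_mul_of_nonneg_left (hbound p (v j)) (norm_nonneg _)
    rw [Real.norm_eq_abs, abs_mul]
    calc |Real.cos ⟪p, x j - x i⟫| * |⟪v i, f p (v j)⟫|
        ≤ 1 * (‖v i‖ * ‖v j‖) := by
          exact mul_le_mul h1 h2 (abs_nonneg _) zero_le_one
      _ = ‖v i‖ * ‖v j‖ := one_mul _
  -- swap sum and integral
  have hswap : ∑ i, ∑ j, (∫ p, Real.cos ⟪p, x j - x i⟫ * ⟪v i, f p (v j)⟫ ∂Φ)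
      = ∫ p, ∑ i, ∑ j, Real.cos ⟪p, x j - x i⟫ * ⟪v i, f p (v j)⟫ ∂Φ := by
    have h1 : ∀ i : Fin n, ∑ j, (∫ p, Real.cos ⟪p, x j - x i⟫ * ⟪v i, f p (v j)⟫ ∂Φ)
        = ∫ p, ∑ j, Real.cos ⟪p, x j - x i⟫ * ⟪v i, f p (v j)⟫ ∂Φ :=
      fun i => (integral_finset_sum _ fun j _ => hint i j).symm
    simp_rw [h1]
    exact (integral_finset_sum _ fun i _ =>
      integrable_finset_sum _ fun j _ => hint i j).symm
  rw [hswap]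
  -- pointwise nonnegativity
  refine integral_nonneg fun p => ?_
  have hq : ∀ c : Fin n → ℝ,
      (0:ℝ) ≤ ∑ i, ∑ j, c i * c j * ⟪v i, f p (v j)⟫ := by
    intro c
    have h0 := hpos p (∑ i, c i • v i)
    have hexp : ⟪∑ i, c i • v i, (f p) (∑ j, c j • v j)⟫
        = ∑ i, ∑ j, c i * c j * ⟪v i, f p (v j)⟫ := by
      rw [map_sum, sum_inner]
      refine Finset.sum_congr rfl fun i _ => ?_
      rw [inner_sum]
      refine Finset.sum_congr rfl fun j _ => ?_
      rw [LinearMap.map_smul, real_inner_smul_left, real_inner_smul_right]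
      ring
    rw [hexp] at h0
    exact h0
  have hexpand : ∀ i j : Fin n, Real.cos ⟪p, x j - x i⟫
      = Real.cos ⟪p, x i⟫ * Real.cos ⟪p, x j⟫
        + Real.sin ⟪p, x i⟫ * Real.sin ⟪p, x j⟫ := by
    intro i j
    rw [inner_sub_right, Real.cos_sub]
    ring
  calc (0:ℝ) ≤ (∑ i, ∑ j, (Real.cos ⟪p, x i⟫) * (Real.cos ⟪p, x j⟫) * ⟪v i, f p (v j)⟫)
        + (∑ i, ∑ j, (Real.sin ⟪p, x i⟫) * (Real.sin ⟪p, x j⟫) * ⟪v i, f p (v j)⟫) :=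
      add_nonneg (hq fun i => Real.cos ⟪p, x i⟫) (hq fun i => Real.sin ⟪p, x i⟫)
    _ = ∑ i, ∑ j, Real.cos ⟪p, x j - x i⟫ * ⟪v i, f p (v j)⟫ := by
      rw [← Finset.sum_add_distrib]
      refine Finset.sum_congr rfl fun i _ => ?_
      rw [← Finset.sum_add_distrib]
      refine Finset.sum_congr rfl fun j _ => ?_
      rw [hexpand i j]
      ring
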